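/- (Neumann trick.) Let M⋆ ∈ ℝ^{n×n} be a rank-r symmetric matrix with spectral decomposition M⋆ = Σ_{j=1}^r λ⋆_j u⋆_j u⋆_jᵀ, where u⋆_1,…,u⋆_r are orthonormal, and let M = M⋆ + H for a (possibly asymmetric) matrix H ∈ ℝ^{n×n}. Suppose λ_l is an eigenvalue of M with eigenvector u_l and that ‖H‖ < |λ_l|. Then u_l = Σ_{j=1}^r (λ⋆_j / λ_l)(u⋆_jᵀ u_l) · Σ_{k=0}^∞ λ_l^{−k} H^k u⋆_j, where the series converges absolutely. In particular, if r = 1 with M⋆ = λ⋆ u⋆ u⋆ᵀ and ‖H‖ < |λ_1|, then u_1 = (λ⋆/λ_1)(u⋆ᵀ u_1) Σ_{k=0}^∞ λ_1^{−k} H^k u⋆. -/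

import Mathlib

open Matrix

noncomputable def opNorm {n : ℕ} (A : Matrix (Fin n) (Fin n) ℝ) : ℝ :=
  ‖LinearMap.toContinuousLinearMap (Matrix.toEuclideanLin A)‖

private lemma pi_le_euclid {n : ℕ} (y : Fin n → ℝ) :
    ‖y‖ ≤ ‖(WithLp.equiv 2 (Fin n → ℝ)).symm y‖ := by
  rw [pi_norm_le_iff_of_nonneg (norm_nonneg _)]
  intro i
  rw [EuclideanSpace.norm_eq]
  have h1 : ‖y i‖ = Real.sqrt (‖y i‖ ^ 2) := by
    rw [Real.sqrt_sq (norm_nonneg _)]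
  rw [h1]
  apply Real.sqrt_le_sqrt
  calc ‖y i‖ ^ 2 ≤ ∑ j, ‖y j‖ ^ 2 :=
        Finset.single_le_sum (f := fun j => ‖y j‖ ^ 2)
          (fun j _ => sq_nonneg _) (Finset.mem_univ i)
    _ = ∑ j, ‖(WithLp.equiv 2 (Fin n → ℝ)).symm y j‖ ^ 2 := rfl

private lemma sum_mulVec' {N : ℕ} {ι : Type*} (s : Finset ι)
    (M : ι → Matrix (Fin N) (Fin N) ℝ) (x : Fin N → ℝ) :
    (∑ j ∈ s, M j) *ᵥ x = ∑ j ∈ s, M j *ᵥ x := by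
  classical
  induction s using Finset.induction_on with
  | empty => simp
  | insert _ _ h ih =>
    rw [Finset.sum_insert h, Finset.sum_insert h, Matrix.add_mulVec, ih]

theorem stmt1 {n r : ℕ}
    (lamstar : Fin r → ℝ) (ustar : Fin r → Fin n → ℝ)
    (horth : ∀ i j : Fin r, ustar i ⬝ᵥ ustar j = if i = j then 1 else 0)
    (hnz : ∀ j, lamstar j ≠ 0)
    (Mstar H : Matrix (Fin n) (Fin n) ℝ)
    (hM : Mstar = ∑ j, lamstar j • vecMulVec (ustar j) (ustar j))
    (lam : ℝ) (u : Fin n → ℝ)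
    (heig : (Mstar + H).mulVec u = lam • u)
    (hH : opNorm H < |lam|) :
    (∀ j : Fin r, Summable fun k : ℕ => ‖(lam ^ k)⁻¹ • (H ^ k).mulVec (ustar j)‖) ∧
    u = ∑ j : Fin r, ((lamstar j / lam) * (ustar j ⬝ᵥ u)) •
          ∑' k : ℕ, (lam ^ k)⁻¹ • (H ^ k).mulVec (ustar j) := by
  classical
  set e := (WithLp.equiv 2 (Fin n → ℝ)).symm with he
  set A := LinearMap.toContinuousLinearMap (Matrix.toEuclideanLin H) with hA
  have hHnn : (0:ℝ) ≤ opNorm H := norm_nonneg _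
  have hlamabs : 0 < |lam| := lt_of_le_of_lt hHnn hH
  have hlam0 : lam ≠ 0 := by
    intro h; rw [h, abs_zero] at hlamabs; exact lt_irrefl _ hlamabs
  -- euclidean norm of ustar j is 1
  have hunorm : ∀ j, ‖e (ustar j)‖ = 1 := by
    intro j
    have hd : ustar j ⬝ᵥ ustar j = 1 := by simpa using horth j j
    rw [he, EuclideanSpace.norm_eq]
    have hc : ∀ i, ‖(WithLp.equiv 2 (Fin n → ℝ)).symm (ustar j) i‖ ^ 2
        = ustar j i * ustar j i := by
      intro i
      have h2 : (WithLp.equiv 2 (Fin n → ℝ)).symm (ustar j) i = ustar j i := rfl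
      rw [h2, Real.norm_eq_abs, sq_abs, sq]
    rw [Finset.sum_congr rfl (fun i _ => hc i)]
    rw [show ∑ i, ustar j i * ustar j i = ustar j ⬝ᵥ ustar j from rfl, hd, Real.sqrt_one]
  -- key operator norm bound
  have hApp : ∀ (v : Fin n → ℝ), e (H *ᵥ v) = A (e v) := fun _ => rfl
  have key : ∀ (k : ℕ) (v : Fin n → ℝ),
      ‖e ((H ^ k) *ᵥ v)‖ ≤ opNorm H ^ k * ‖e v‖ := by
    intro k
    induction k with
    | zero => intro v; simp [Matrix.one_mulVec]
    | succ k ih =>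
      intro v
      have h1 : (H ^ (k+1)) *ᵥ v = (H ^ k) *ᵥ (H *ᵥ v) := by
        rw [pow_succ, ← Matrix.mulVec_mulVec]
      rw [h1]
      calc ‖e ((H ^ k) *ᵥ (H *ᵥ v))‖ ≤ opNorm H ^ k * ‖e (H *ᵥ v)‖ := ih _
        _ ≤ opNorm H ^ k * (opNorm H * ‖e v‖) := by
            apply mul_le_mul_of_nonneg_left _ (pow_nonneg hHnn k)
            rw [hApp]
            exact A.le_opNorm _
        _ = opNorm H ^ (k+1) * ‖e v‖ := by ring
  -- bound on the terms
  set f : Fin r → ℕ → (Fin n → ℝ) :=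
    fun j k => (lam ^ k)⁻¹ • (H ^ k) *ᵥ ustar j with hf
  have hbound : ∀ j k, ‖f j k‖ ≤ (opNorm H / |lam|) ^ k := by
    intro j k
    calc ‖(lam ^ k)⁻¹ • (H ^ k) *ᵥ ustar j‖
        = |lam|⁻¹ ^ k * ‖(H ^ k) *ᵥ ustar j‖ := by
          rw [norm_smul, Real.norm_eq_abs, abs_inv, abs_pow, inv_pow]
      _ ≤ |lam|⁻¹ ^ k * (opNorm H ^ k * ‖e (ustar j)‖) := by
          apply mul_le_mul_of_nonneg_left _ (by positivity)
          exact le_trans (pi_le_euclid _) (key k _)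
      _ = (opNorm H / |lam|) ^ k := by
          rw [hunorm j, mul_one, div_pow, inv_pow, inv_mul_eq_div]
  have hratio0 : (0:ℝ) ≤ opNorm H / |lam| := div_nonneg hHnn (le_of_lt hlamabs)
  have hratio1 : opNorm H / |lam| < 1 := (div_lt_one hlamabs).mpr hH
  have hsum1 : ∀ j, Summable fun k : ℕ => ‖f j k‖ := by
    intro j
    exact Summable.of_nonneg_of_le (fun k => norm_nonneg _) (hbound j)
      (summable_geometric_of_lt_one hratio0 hratio1)
  have hsum2 : ∀ j, Summable (f j) := fun j => (hsum1 j).of_norm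
  refine ⟨hsum1, ?_⟩
  -- telescoping identity
  set S : Fin r → (Fin n → ℝ) := fun j => ∑' k, f j k with hS
  have hf0 : ∀ j, f j 0 = ustar j := by
    intro j
    show (lam ^ 0)⁻¹ • (H ^ 0) *ᵥ ustar j = ustar j
    simp [Matrix.one_mulVec]
  have hHf : ∀ j k, H *ᵥ f j k = lam • f j (k+1) := by
    intro j k
    show H *ᵥ ((lam ^ k)⁻¹ • (H ^ k) *ᵥ ustar j)
        = lam • ((lam ^ (k+1))⁻¹ • (H ^ (k+1)) *ᵥ ustar j)
    rw [Matrix.mulVec_smul, Matrix.mulVec_mulVec, ← pow_succ', smul_smul]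
    congr 1
    field_simp
    ring
  have hmulVec_tsum : ∀ j, H *ᵥ S j = ∑' k, H *ᵥ f j k := by
    intro j
    have h := ContinuousLinearMap.map_tsum
      (LinearMap.toContinuousLinearMap (Matrix.mulVecLin H)) (hsum2 j)
    simpa [Matrix.mulVecLin_apply] using h
  have hrec : ∀ j, lam • S j - H *ᵥ S j = lam • ustar j := by
    intro j
    have h1 : H *ᵥ S j = lam • (S j - ustar j) := by
      rw [hmulVec_tsum j]
      calc ∑' k, H *ᵥ f j k = ∑' k, lam • f j (k+1) := tsum_congr (fun k => hHf j k)
        _ = lam • ∑' k, f j (k+1) := tsum_const_smul'' lam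
        _ = lam • (S j - ustar j) := by
            congr 1
            have h2 := Summable.tsum_eq_zero_add (hsum2 j)
            show ∑' k, f j (k+1) = (∑' k, f j k) - ustar j
            rw [h2, hf0 j]
            abel
    rw [h1, smul_sub]
    abel
  -- the candidate vector
  set v : Fin n → ℝ := ∑ j : Fin r, ((lamstar j / lam) * (ustar j ⬝ᵥ u)) • S j with hv
  have hMstaru : Mstar *ᵥ u = ∑ j, (lamstar j * (ustar j ⬝ᵥ u)) • ustar j := by
    rw [hM, sum_mulVec']
    refine Finset.sum_congr rfl (fun j _ => ?_)
    rw [Matrix.smul_mulVec]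
    have hvv : vecMulVec (ustar j) (ustar j) *ᵥ u = (ustar j ⬝ᵥ u) • ustar j := by
      ext i
      simp only [Matrix.mulVec, vecMulVec_apply, dotProduct, Pi.smul_apply,
        smul_eq_mul, Finset.sum_mul]
      exact Finset.sum_congr rfl (fun k _ => by ring)
    rw [hvv, smul_smul]
  have hveq : lam • v - H *ᵥ v = Mstar *ᵥ u := by
    have hHsum : H *ᵥ (∑ j : Fin r, ((lamstar j / lam) * (ustar j ⬝ᵥ u)) • S j)
        = ∑ j : Fin r, H *ᵥ (((lamstar j / lam) * (ustar j ⬝ᵥ u)) • S j) := by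
      simpa only [Matrix.mulVecLin_apply] using
        map_sum (Matrix.mulVecLin H) (fun j => ((lamstar j / lam) * (ustar j ⬝ᵥ u)) • S j)
          Finset.univ
    rw [hv, hHsum, Finset.smul_sum, ← Finset.sum_sub_distrib, hMstaru]
    refine Finset.sum_congr rfl (fun j _ => ?_)
    rw [Matrix.mulVec_smul, smul_comm lam, ← smul_sub, hrec j, smul_smul]
    congr 1
    field_simp
  have hueq : lam • u - H *ᵥ u = Mstar *ᵥ u := by
    rw [Matrix.add_mulVec] at heig
    rw [← heig]; abel
  -- injectivity
  have hdiff : lam • (u - v) = H *ᵥ (u - v) := by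
    rw [Matrix.mulVec_sub, smul_sub]
    calc lam • u - lam • v
        = (lam • u - H *ᵥ u) - (lam • v - H *ᵥ v) + (H *ᵥ u - H *ᵥ v) := by abel
      _ = H *ᵥ u - H *ᵥ v := by rw [hueq, hveq]; abel
  have hz : u - v = 0 := by
    by_contra hne
    have hnorm : ‖e (u - v)‖ ≠ 0 := by
      simp only [ne_eq, norm_eq_zero]
      intro h
      apply hne
      have h3 : (WithLp.equiv 2 (Fin n → ℝ)) (e (u - v)) = u - v := rfl
      rw [← h3, h]; rfl
    have hpos : 0 < ‖e (u - v)‖ := lt_of_le_of_ne (norm_nonneg _) (Ne.symm hnorm)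
    have h1 : ‖e (lam • (u - v))‖ = |lam| * ‖e (u - v)‖ := by
      have h4 : e (lam • (u - v)) = lam • e (u - v) := rfl
      rw [h4, norm_smul, Real.norm_eq_abs]
    have h2 : ‖e (H *ᵥ (u - v))‖ ≤ opNorm H * ‖e (u - v)‖ := by
      rw [hApp]; exact A.le_opNorm _
    rw [hdiff] at h1
    have h5 : |lam| * ‖e (u - v)‖ ≤ opNorm H * ‖e (u - v)‖ := h1 ▸ h2
    have hlt : opNorm H * ‖e (u - v)‖ < |lam| * ‖e (u - v)‖ :=
      mul_lt_mul_of_pos_right hH hpos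
    linarith
  have huv : u = v := by
    have := sub_eq_zero.mp hz
    exact this
  rw [huv, hv]
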